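/- Let n, m, k, l ∈ ℕ. If there exists a symmetric intersecting family 𝒜 of k-element subsets of [n] and a symmetric intersecting family ℬ of l-element subsets of [m], then the tensor product 𝒜 ⊗ ℬ = {x ⊗ y : x ∈ 𝒜, y ∈ ℬ} is a symmetric intersecting family of kl-element subsets of [nm] with |𝒜 ⊗ ℬ| = |𝒜|·|ℬ|. Consequently, s(nm, kl) ≥ s(n,k)·s(m,l). -/
import Mathlib


open scoped Classical

/-- A family of finite sets is intersecting if any two of its members meet. -/
def IsIntersecting {α : Type*} [DecidableEq α] (A : Finset (Finset α)) : Prop :=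
  ∀ x ∈ A, ∀ y ∈ A, (x ∩ y).Nonempty

/-- A family of finite sets is symmetric if its automorphism group is transitive:
for all `i j` there is a permutation `σ` with `σ(𝒜) = 𝒜` and `σ i = j`. -/
def IsSymmetricFam {α : Type*} [DecidableEq α] (A : Finset (Finset α)) : Prop :=
  ∀ i j : α, ∃ σ : Equiv.Perm α, A.image (fun x => x.image σ) = A ∧ σ i = j

/-- `s(n,k)`: the maximum size of a symmetric intersecting family of `k`-element
subsets of `[n]`. -/
noncomputable def symIntMax (n k : ℕ) : ℕ :=
  sSup {m | ∃ A : Finset (Finset (Fin n)),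
    (∀ x ∈ A, x.card = k) ∧ IsSymmetricFam A ∧ IsIntersecting A ∧ A.card = m}

/-- The element of `[nm]` corresponding to the pair `(i, j) ∈ [n] × [m]`;
with 0-indexing, `(i, j) ↦ i·m + j` (i.e. `(i-1)m + j` with 1-indexing). -/
def tensorElem {n m : ℕ} (i : Fin n) (j : Fin m) : Fin (n * m) :=
  ⟨i.1 * m + j.1, by
    have hi := i.isLt
    have hj := j.isLt
    calc i.1 * m + j.1 < i.1 * m + m := by omega
      _ = (i.1 + 1) * m := by ring
      _ ≤ n * m := Nat.mul_le_mul_right m hi⟩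

/-- The tensor product `x ⊗ y ⊆ [nm]` of `x ⊆ [n]` and `y ⊆ [m]`:
`(i-1)m + j ∈ x ⊗ y` iff `i ∈ x` and `j ∈ y`. -/
def tensorFinset {n m : ℕ} (x : Finset (Fin n)) (y : Finset (Fin m)) :
    Finset (Fin (n * m)) :=
  (x ×ˢ y).image fun p => tensorElem p.1 p.2

/-- The tensor product `𝒜 ⊗ ℬ = {x ⊗ y : x ∈ 𝒜, y ∈ ℬ}` of two families. -/
def tensorFam {n m : ℕ} (A : Finset (Finset (Fin n))) (B : Finset (Finset (Fin m))) :
    Finset (Finset (Fin (n * m))) :=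
  (A ×ˢ B).image fun p => tensorFinset p.1 p.2

/-- If `𝒜` is a symmetric intersecting family of `k`-subsets of `[n]` and `ℬ` one of
`l`-subsets of `[m]`, then `𝒜 ⊗ ℬ` is a symmetric intersecting family of `kl`-subsets
of `[nm]` with `|𝒜 ⊗ ℬ| = |𝒜||ℬ|`; consequently `s(nm, kl) ≥ s(n,k)·s(m,l)`. -/

lemma tensorElem_inj {n m : ℕ} {a a' : Fin n} {b b' : Fin m}
    (h : tensorElem a b = tensorElem a' b') : a = a' ∧ b = b' := by
  have h1 : a.1 * m + b.1 = a'.1 * m + b'.1 := congrArg Fin.val h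
  have hb := b.isLt
  have hb' := b'.isLt
  have hbv : b.1 = b'.1 := by
    have := congrArg (· % m) h1
    simpa [Nat.mul_add_mod', Nat.mod_eq_of_lt hb, Nat.mod_eq_of_lt hb'] using this
  have hav : a.1 = a'.1 := by
    have hm : 0 < m := Nat.pos_of_ne_zero (by rintro rfl; omega)
    have : a.1 * m = a'.1 * m := by omega
    exact Nat.eq_of_mul_eq_mul_right hm this
  exact ⟨Fin.ext hav, Fin.ext hbv⟩

lemma mem_tensorFinset {n m : ℕ} {x : Finset (Fin n)} {y : Finset (Fin m)}
    {a : Fin n} {b : Fin m} :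
    tensorElem a b ∈ tensorFinset x y ↔ a ∈ x ∧ b ∈ y := by
  simp only [tensorFinset, Finset.mem_image, Finset.mem_product, Prod.exists]
  constructor
  · rintro ⟨a', b', ⟨ha', hb'⟩, h⟩
    obtain ⟨rfl, rfl⟩ := tensorElem_inj h
    exact ⟨ha', hb'⟩
  · rintro ⟨ha, hb⟩
    exact ⟨a, b, ⟨ha, hb⟩, rfl⟩

lemma tensorFinset_card {n m : ℕ} (x : Finset (Fin n)) (y : Finset (Fin m)) :
    (tensorFinset x y).card = x.card * y.card := by
  rw [tensorFinset, Finset.card_image_of_injOn, Finset.card_product]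
  intro p _ q _ h
  obtain ⟨h1, h2⟩ := tensorElem_inj h
  exact Prod.ext h1 h2

lemma tensorFinset_inj {n m : ℕ} {x x' : Finset (Fin n)} {y y' : Finset (Fin m)}
    (hx : x.Nonempty) (hy : y.Nonempty) (hx' : x'.Nonempty) (hy' : y'.Nonempty)
    (h : tensorFinset x y = tensorFinset x' y') : x = x' ∧ y = y' := by
  constructor
  · ext a
    obtain ⟨b, hb⟩ := hy
    obtain ⟨b', hb'⟩ := hy'
    constructor
    · intro ha
      have := (mem_tensorFinset (x := x') (y := y')).1 (h ▸ mem_tensorFinset.2 ⟨ha, hb⟩)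
      exact this.1
    · intro ha
      have := (mem_tensorFinset (x := x) (y := y)).1 (h ▸ mem_tensorFinset.2 ⟨ha, hb'⟩)
      exact this.1
  · ext b
    obtain ⟨a, ha⟩ := hx
    obtain ⟨a', ha'⟩ := hx'
    constructor
    · intro hb
      exact ((mem_tensorFinset (x := x') (y := y')).1 (h ▸ mem_tensorFinset.2 ⟨ha, hb⟩)).2
    · intro hb
      exact ((mem_tensorFinset (x := x) (y := y)).1 (h ▸ mem_tensorFinset.2 ⟨ha', hb⟩)).2

/-- decomposition of an element of Fin (n*m) -/
lemma tensor_surj {n m : ℕ} (c : Fin (n * m)) :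
    ∃ (a : Fin n) (b : Fin m), tensorElem a b = c := by
  have hc := c.isLt
  have hm : 0 < m := by
    rcases Nat.eq_zero_or_pos m with h | h
    · subst h; omega
    · exact h
  refine ⟨⟨c.1 / m, ?_⟩, ⟨c.1 % m, Nat.mod_lt _ hm⟩, ?_⟩
  · exact Nat.div_lt_of_lt_mul (Nat.mul_comm n m ▸ hc)
  · apply Fin.ext
    show c.1 / m * m + c.1 % m = c.1
    rw [Nat.mul_comm]
    exact Nat.div_add_mod _ _

lemma prod_image_image {α β γ δ ε : Type*} [DecidableEq γ] [DecidableEq δ] [DecidableEq ε]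
    (A : Finset α) (B : Finset β) (f : α → γ) (g : β → δ) (F : γ → δ → ε) :
    ((A.image f) ×ˢ (B.image g)).image (fun p => F p.1 p.2)
      = (A ×ˢ B).image (fun p => F (f p.1) (g p.2)) := by
  ext z
  simp only [Finset.mem_image, Finset.mem_product, Prod.exists]
  constructor
  · rintro ⟨c, d, ⟨hc, hd⟩, rfl⟩
    obtain ⟨a, ha, rfl⟩ := hc
    obtain ⟨b, hb, rfl⟩ := hd
    exact ⟨a, b, ⟨ha, hb⟩, rfl⟩
  · rintro ⟨a, b, ⟨ha, hb⟩, rfl⟩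
    exact ⟨f a, g b, ⟨⟨a, ha, rfl⟩, ⟨b, hb, rfl⟩⟩, rfl⟩

noncomputable def tensorEquiv (n m : ℕ) : Fin n × Fin m ≃ Fin (n * m) :=
  Equiv.ofBijective (fun p => tensorElem p.1 p.2)
    ⟨fun p q h => Prod.ext (tensorElem_inj h).1 (tensorElem_inj h).2,
     fun c => by obtain ⟨a, b, h⟩ := tensor_surj c; exact ⟨(a, b), h⟩⟩

noncomputable def tensorPerm {n m : ℕ} (σ1 : Equiv.Perm (Fin n)) (σ2 : Equiv.Perm (Fin m)) :
    Equiv.Perm (Fin (n * m)) :=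
  ((tensorEquiv n m).symm.trans (σ1.prodCongr σ2)).trans (tensorEquiv n m)

lemma tensorPerm_apply {n m : ℕ} (σ1 : Equiv.Perm (Fin n)) (σ2 : Equiv.Perm (Fin m))
    (a : Fin n) (b : Fin m) :
    tensorPerm σ1 σ2 (tensorElem a b) = tensorElem (σ1 a) (σ2 b) := by
  simp only [tensorPerm, Equiv.trans_apply]
  rw [show tensorElem a b = tensorEquiv n m (a, b) from rfl, Equiv.symm_apply_apply]
  rfl

lemma image_tensorFinset {n m : ℕ} (σ1 : Equiv.Perm (Fin n)) (σ2 : Equiv.Perm (Fin m))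
    (x : Finset (Fin n)) (y : Finset (Fin m)) :
    (tensorFinset x y).image (tensorPerm σ1 σ2)
      = tensorFinset (x.image σ1) (y.image σ2) := by
  unfold tensorFinset
  rw [Finset.image_image, prod_image_image]
  apply Finset.image_congr
  intro p _
  exact tensorPerm_apply σ1 σ2 p.1 p.2

lemma image_tensorFam {n m : ℕ} (σ1 : Equiv.Perm (Fin n)) (σ2 : Equiv.Perm (Fin m))
    (A : Finset (Finset (Fin n))) (B : Finset (Finset (Fin m))) :
    (tensorFam A B).image (fun z => z.image (tensorPerm σ1 σ2))
      = tensorFam (A.image (fun x => x.image σ1)) (B.image (fun y => y.image σ2)) := by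
  unfold tensorFam
  rw [Finset.image_image, prod_image_image]
  apply Finset.image_congr
  intro p _
  exact image_tensorFinset σ1 σ2 p.1 p.2

lemma mem_nonempty_of_intersecting {α : Type*} [DecidableEq α] {A : Finset (Finset α)}
    (hAi : IsIntersecting A) {x : Finset α} (hx : x ∈ A) : x.Nonempty := by
  have := hAi x hx x hx
  simpa using this

lemma tensor_main (n m k l : ℕ)
    (A : Finset (Finset (Fin n))) (hAu : ∀ x ∈ A, x.card = k)
    (hAs : IsSymmetricFam A) (hAi : IsIntersecting A)
    (B : Finset (Finset (Fin m))) (hBu : ∀ y ∈ B, y.card = l)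
    (hBs : IsSymmetricFam B) (hBi : IsIntersecting B) :
    (∀ z ∈ tensorFam A B, z.card = k * l) ∧
    IsSymmetricFam (tensorFam A B) ∧
    IsIntersecting (tensorFam A B) ∧
    (tensorFam A B).card = A.card * B.card := by
  refine ⟨?_, ?_, ?_, ?_⟩
  · intro z hz
    obtain ⟨⟨x, y⟩, hxy, rfl⟩ := Finset.mem_image.1 hz
    rw [Finset.mem_product] at hxy
    rw [tensorFinset_card, hAu x hxy.1, hBu y hxy.2]
  · intro i j
    obtain ⟨i1, i2, rfl⟩ := tensor_surj i
    obtain ⟨j1, j2, rfl⟩ := tensor_surj j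
    obtain ⟨σ1, hσ1, hσ1e⟩ := hAs i1 j1
    obtain ⟨σ2, hσ2, hσ2e⟩ := hBs i2 j2
    refine ⟨tensorPerm σ1 σ2, ?_, ?_⟩
    · rw [image_tensorFam, hσ1, hσ2]
    · rw [tensorPerm_apply, hσ1e, hσ2e]
  · intro z hz z' hz'
    obtain ⟨⟨x, y⟩, hxy, rfl⟩ := Finset.mem_image.1 hz
    obtain ⟨⟨x', y'⟩, hxy', rfl⟩ := Finset.mem_image.1 hz'
    rw [Finset.mem_product] at hxy hxy'
    obtain ⟨a, ha⟩ := hAi x hxy.1 x' hxy'.1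
    obtain ⟨b, hb⟩ := hBi y hxy.2 y' hxy'.2
    rw [Finset.mem_inter] at ha hb
    exact ⟨tensorElem a b, Finset.mem_inter.2
      ⟨mem_tensorFinset.2 ⟨ha.1, hb.1⟩, mem_tensorFinset.2 ⟨ha.2, hb.2⟩⟩⟩
  · rw [tensorFam, Finset.card_image_of_injOn, Finset.card_product]
    intro p hp q hq h
    rw [Finset.mem_coe, Finset.mem_product] at hp hq
    obtain ⟨h1, h2⟩ := tensorFinset_inj (mem_nonempty_of_intersecting hAi hp.1)
      (mem_nonempty_of_intersecting hBi hp.2) (mem_nonempty_of_intersecting hAi hq.1)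
      (mem_nonempty_of_intersecting hBi hq.2) h
    exact Prod.ext h1 h2

lemma symIntMax_set_nonempty (n k : ℕ) :
    {m | ∃ A : Finset (Finset (Fin n)),
      (∀ x ∈ A, x.card = k) ∧ IsSymmetricFam A ∧ IsIntersecting A ∧ A.card = m}.Nonempty := by
  refine ⟨0, ∅, by simp, ?_, by simp [IsIntersecting], by simp⟩
  intro i j
  exact ⟨Equiv.swap i j, by simp, Equiv.swap_apply_left i j⟩

lemma symIntMax_set_bdd (n k : ℕ) :
    BddAbove {m | ∃ A : Finset (Finset (Fin n)),
      (∀ x ∈ A, x.card = k) ∧ IsSymmetricFam A ∧ IsIntersecting A ∧ A.card = m} := by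
  refine ⟨Fintype.card (Finset (Fin n)), ?_⟩
  rintro c ⟨A, _, _, _, rfl⟩
  exact Finset.card_le_univ A

theorem tensor_product_symmetric_intersecting (n m k l : ℕ)
    (A : Finset (Finset (Fin n))) (hAu : ∀ x ∈ A, x.card = k)
    (hAs : IsSymmetricFam A) (hAi : IsIntersecting A)
    (B : Finset (Finset (Fin m))) (hBu : ∀ y ∈ B, y.card = l)
    (hBs : IsSymmetricFam B) (hBi : IsIntersecting B) :
    (∀ z ∈ tensorFam A B, z.card = k * l) ∧
    IsSymmetricFam (tensorFam A B) ∧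
    IsIntersecting (tensorFam A B) ∧
    (tensorFam A B).card = A.card * B.card ∧
    symIntMax n k * symIntMax m l ≤ symIntMax (n * m) (k * l) := by
  obtain ⟨h1, h2, h3, h4⟩ := tensor_main n m k l A hAu hAs hAi B hBu hBs hBi
  refine ⟨h1, h2, h3, h4, ?_⟩
  have hA0 : symIntMax n k ∈ {c | ∃ A : Finset (Finset (Fin n)),
      (∀ x ∈ A, x.card = k) ∧ IsSymmetricFam A ∧ IsIntersecting A ∧ A.card = c} :=
    Nat.sSup_mem (symIntMax_set_nonempty n k) (symIntMax_set_bdd n k)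
  have hB0 : symIntMax m l ∈ {c | ∃ B : Finset (Finset (Fin m)),
      (∀ y ∈ B, y.card = l) ∧ IsSymmetricFam B ∧ IsIntersecting B ∧ B.card = c} :=
    Nat.sSup_mem (symIntMax_set_nonempty m l) (symIntMax_set_bdd m l)
  obtain ⟨A0, hA0u, hA0s, hA0i, hA0c⟩ := hA0
  obtain ⟨B0, hB0u, hB0s, hB0i, hB0c⟩ := hB0
  obtain ⟨g1, g2, g3, g4⟩ := tensor_main n m k l A0 hA0u hA0s hA0i B0 hB0u hB0s hB0i
  have : symIntMax n k * symIntMax m l ∈ {c | ∃ C : Finset (Finset (Fin (n * m))),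
      (∀ z ∈ C, z.card = k * l) ∧ IsSymmetricFam C ∧ IsIntersecting C ∧ C.card = c} :=
    ⟨tensorFam A0 B0, g1, g2, g3, by rw [g4, hA0c, hB0c]⟩
  exact le_csSup (symIntMax_set_bdd (n * m) (k * l)) this
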